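/- Let Θ be a compact metric space, r:Θ→Θ uniquely ergodic, and let f be a UEF monotone circle map (not necessarily homotopic to the identity). Then h_top(f) = h_top(r). In particular, if f is a QPF monotone circle map (Θ=T¹ and r an irrational rotation), then h_top(f) = 0. -/

import Mathlib

open Filter MeasureTheory Topology

attribute [local instance] ZeroLEOneClass.factZeroLtOne

set_option linter.unusedSectionVars false
set_option maxHeartbeats 1000000

open Set Dynamics UniformSpace
open scoped ENNReal

noncomputable section

namespace S11

abbrev C1 := AddCircle (1 : ℝ)

def bb (ψ : C1) : ℝ := (AddCircle.equivIco 1 0 ψ : ℝ)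

lemma bb_mem (ψ : C1) : bb ψ ∈ Set.Ico (0:ℝ) 1 := by
  have h := (AddCircle.equivIco 1 0 ψ).2
  simpa [bb] using h

lemma bb_coe (ψ : C1) : ((bb ψ : ℝ) : C1) = ψ := by
  have h : ((bb ψ : ℝ) : C1) = (AddCircle.equivIco 1 0).symm ((AddCircle.equivIco 1 0) ψ) := rfl
  rw [h, Equiv.symm_apply_apply]

lemma toIcoMod_self_of_mem {d : ℝ} (h0 : 0 ≤ d) (h1 : d < 1) :
    toIcoMod (one_pos) (0:ℝ) d = d :=
  (toIcoMod_eq_self one_pos).2 (by constructor <;> simp [h0, h1])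

lemma toIcoMod_self_of_neg {d : ℝ} (h0 : -1 ≤ d) (h1 : d < 0) :
    toIcoMod (one_pos) (0:ℝ) d = d + 1 := by
  have h2 : toIcoMod (one_pos) (0:ℝ) (d + 1) = d + 1 :=
    toIcoMod_self_of_mem (by linarith) (by linarith)
  rw [← h2, toIcoMod_add_right]

lemma toIocMod_self_of_mem {d : ℝ} (h0 : 0 < d) (h1 : d ≤ 1) :
    toIocMod (one_pos) (0:ℝ) d = d :=
  (toIocMod_eq_self one_pos).2 (by constructor <;> simp [h0, h1])

lemma toIocMod_self_of_nonpos {d : ℝ} (h0 : -1 < d) (h1 : d ≤ 0) :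
    toIocMod (one_pos) (0:ℝ) d = d + 1 := by
  have h2 : toIocMod (one_pos) (0:ℝ) (d + 1) = d + 1 :=
    toIocMod_self_of_mem (by linarith) (by linarith)
  rw [← h2, toIocMod_add_right]

lemma bb_of_mem {t : ℝ} (h : t ∈ Set.Ico (0:ℝ) 1) : bb (t : C1) = t := by
  unfold bb
  rw [show (AddCircle.equivIco 1 0) (t : C1) = QuotientAddGroup.equivIcoMod one_pos 0 ↑t from rfl]
  rw [QuotientAddGroup.equivIcoMod_coe]
  exact toIcoMod_self_of_mem h.1 (by simpa using h.2)

lemma dist_coe_le (u v : ℝ) : dist ((u:ℝ) : C1) ((v:ℝ) : C1) ≤ |u - v| := by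
  rw [dist_eq_norm]
  have h : ((u:ℝ) : C1) - ((v:ℝ) : C1) = ((u - v : ℝ) : C1) := (QuotientAddGroup.mk_sub _ u v).symm
  rw [h]
  calc ‖((u - v : ℝ) : C1)‖ ≤ ‖u - v‖ := QuotientAddGroup.norm_mk_le_norm
    _ = |u - v| := Real.norm_eq_abs _

lemma btw_iff' (u v w : ℝ) :
    Btw.btw ((u:ℝ) : C1) ((v:ℝ) : C1) ((w:ℝ) : C1) ↔
      toIcoMod one_pos (0:ℝ) (v - u) ≤ toIocMod one_pos (0:ℝ) (w - u) :=
  QuotientAddGroup.btw_coe_iff'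

/-- representative-based `btw` consequence, for `u v w ∈ [0,1)`. -/
lemma btw_rep_le {u v w : ℝ} (hu : u ∈ Set.Ico (0:ℝ) 1) (hv : v ∈ Set.Ico (0:ℝ) 1)
    (hw : w ∈ Set.Ico (0:ℝ) 1) (h : Btw.btw ((u:ℝ) : C1) ((v:ℝ) : C1) ((w:ℝ) : C1)) :
    (if u ≤ v then v - u else v - u + 1) ≤ (if u < w then w - u else w - u + 1) := by
  rw [btw_iff'] at h
  obtain ⟨hu0, hu1⟩ := hu; obtain ⟨hv0, hv1⟩ := hv; obtain ⟨hw0, hw1⟩ := hw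
  have hico : toIcoMod one_pos (0:ℝ) (v - u) = if u ≤ v then v - u else v - u + 1 := by
    by_cases hc : u ≤ v
    · rw [if_pos hc]; exact toIcoMod_self_of_mem (by linarith) (by linarith)
    · rw [if_neg hc]; exact toIcoMod_self_of_neg (by linarith) (by linarith)
  have hioc : toIocMod one_pos (0:ℝ) (w - u) = if u < w then w - u else w - u + 1 := by
    by_cases hc : u < w
    · rw [if_pos hc]; exact toIocMod_self_of_mem (by linarith) (by linarith)
    · rw [if_neg hc]; exact toIocMod_self_of_nonpos (by linarith) (by linarith)
  rw [hico, hioc] at h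
  exact h

/-- points in increasing order in `[0,1)` are in cyclic order on the circle. -/
lemma btw_of_le {u v w : ℝ} (hu : 0 ≤ u) (huv : u ≤ v) (hvw : v ≤ w) (hw : w < 1) :
    Btw.btw ((u:ℝ) : C1) ((v:ℝ) : C1) ((w:ℝ) : C1) := by
  rw [btw_iff']
  rw [toIcoMod_self_of_mem (by linarith) (by linarith)]
  by_cases hc : u < w
  · rw [toIocMod_self_of_mem (by linarith) (by linarith)]; linarith
  · rw [toIocMod_self_of_nonpos (by linarith) (by linarith)]; linarith


section Lift
variable {H : C1 → C1}

lemma keyH (Hbtw : ∀ x y z : C1, Btw.btw x y z → Btw.btw (H x) (H y) (H z))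
    {u v w : ℝ} (hu : 0 ≤ u) (huv : u ≤ v) (hvw : v ≤ w) (hw : w < 1) :
    (if bb (H ↑u) ≤ bb (H ↑v) then bb (H ↑v) - bb (H ↑u) else bb (H ↑v) - bb (H ↑u) + 1) ≤
      (if bb (H ↑u) < bb (H ↑w) then bb (H ↑w) - bb (H ↑u) else bb (H ↑w) - bb (H ↑u) + 1) := by
  have hb := Hbtw _ _ _ (btw_of_le hu huv hvw hw)
  rw [← bb_coe (H ↑u), ← bb_coe (H ↑v), ← bb_coe (H ↑w)] at hb
  exact btw_rep_le (bb_mem _) (bb_mem _) (bb_mem _) hb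

lemma no_descent (Hcont : Continuous H)
    (Hbtw : ∀ x y z : C1, Btw.btw x y z → Btw.btw (H x) (H y) (H z))
    {z w x y : ℝ} (hz : 0 ≤ z) (hzw : z ≤ w) (hwx : w ≤ x) (hxy : x ≤ y)
    (hy : y < 1) (h1 : bb (H ↑w) < bb (H ↑z)) (h2 : bb (H ↑y) < bb (H ↑x)) : False := by
  set A := bb (H ↑z) with hA
  set B := bb (H ↑w) with hB
  set Cv := bb (H ↑x) with hC
  set D := bb (H ↑y) with hD
  have hA01 : A ∈ Set.Ico (0:ℝ) 1 := bb_mem (H ↑z)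
  have hB01 : B ∈ Set.Ico (0:ℝ) 1 := bb_mem (H ↑w)
  have hC01 : Cv ∈ Set.Ico (0:ℝ) 1 := bb_mem (H ↑x)
  have hD01 : D ∈ Set.Ico (0:ℝ) 1 := bb_mem (H ↑y)
  have hx1 : x < 1 := lt_of_le_of_lt hxy hy
  -- step 1 : Cv ≤ A
  have hCA : Cv ≤ A := by
    by_contra hc
    push_neg at hc
    have s1 := keyH Hbtw hz hzw hwx hx1
    rw [← hA, ← hB, ← hC, if_neg (not_le.2 h1), if_pos hc] at s1
    linarith [hB01.1, hC01.2]
  -- step 2 : D < A and B ≤ D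
  have hDA : D ≤ A := by
    by_contra hc
    push_neg at hc
    have s2 := keyH Hbtw hz hzw (le_trans hwx hxy) hy
    rw [← hA, ← hB, ← hD, if_neg (not_le.2 h1), if_pos hc] at s2
    linarith [hB01.1, hD01.2]
  have hBD : B ≤ D := by
    have s2 := keyH Hbtw hz hzw (le_trans hwx hxy) hy
    rw [← hA, ← hB, ← hD, if_neg (not_le.2 h1), if_neg (not_lt.2 hDA)] at s2
    linarith
  -- step 3 : B = D
  have hBC : B < Cv := lt_of_le_of_lt hBD h2
  have hDB : D = B := by
    by_contra hc
    have hlt : B < D := lt_of_le_of_ne hBD (fun h => hc h.symm)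
    have s3 := keyH Hbtw (le_trans hz hzw) hwx hxy hy
    rw [← hB, ← hC, ← hD, if_pos (le_of_lt hBC), if_pos hlt] at s3
    linarith
  -- now B = D < Cv ≤ A < 1
  set m := (B + Cv)/2 with hm
  have hmB : B < m := by rw [hm]; linarith
  have hmC : m < Cv := by rw [hm]; linarith
  have hm01 : m ∈ Set.Ico (0:ℝ) 1 := ⟨by linarith [hB01.1], by linarith [hC01.2]⟩
  by_cases hcase : ∃ y' ∈ Set.Icc x y, H ↑y' = ((m:ℝ) : C1)
  · obtain ⟨y', hy'mem, hy'⟩ := hcase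
    have haY : bb (H ↑y') = m := by rw [hy', bb_of_mem hm01]
    have s5 := keyH Hbtw (le_trans hz hzw) hwx hy'mem.1 (lt_of_le_of_lt hy'mem.2 hy)
    rw [← hB, ← hC, haY, if_pos (le_of_lt hBC), if_pos hmB] at s5
    linarith
  · push_neg at hcase
    set ρ : ℝ → ℝ := fun t => (AddCircle.equivIoc 1 m (H ↑t) : ℝ) with hρ
    have hρcoe : ∀ t, ((ρ t : ℝ) : C1) = H ↑t := by
      intro t
      have h : ((ρ t : ℝ) : C1) = (AddCircle.equivIoc 1 m).symm (AddCircle.equivIoc 1 m (H ↑t)) := rfl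
      rw [h, Equiv.symm_apply_apply]
    have hρcont : ContinuousOn ρ (Set.Icc x y) := by
      intro t ht
      have hne : H ↑t ≠ ((m:ℝ) : C1) := hcase t ht
      have hg : ContinuousAt (fun q : ℝ => H ((q:ℝ):C1)) t :=
        Hcont.continuousAt.comp ((AddCircle.continuous_mk' 1).continuousAt)
      have c3 : ContinuousAt (fun q : C1 => ((AddCircle.equivIoc 1 m q : ℝ)))
          ((fun q : ℝ => H ((q:ℝ):C1)) t) :=
        continuousAt_subtype_val.comp (AddCircle.continuousAt_equivIoc 1 m hne)
      exact (ContinuousAt.comp (x := t) c3 hg).continuousWithinAt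
    have hval : ∀ t v : ℝ, H ((t:ℝ):C1) = ((v:ℝ):C1) → m < v → v ≤ m + 1 → ρ t = v := by
      intro t v hv hv1 hv2
      rw [hρ]
      simp only
      rw [hv]
      rw [show (AddCircle.equivIoc 1 m) ((v:ℝ):C1) = QuotientAddGroup.equivIocMod one_pos m ↑v from rfl]
      rw [QuotientAddGroup.equivIocMod_coe]
      exact (toIocMod_eq_self one_pos).2 ⟨hv1, hv2⟩
    have hHx : H ((x:ℝ):C1) = ((Cv:ℝ):C1) := by rw [hC, bb_coe]
    have hρx : ρ x = Cv := hval x Cv hHx hmC (by linarith [hC01.2, hB01.1])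
    have hρy : ρ y = B + 1 := by
      have hHy : H ((y:ℝ):C1) = ((B:ℝ):C1) := by
        rw [show B = D from hDB.symm, hD, bb_coe]
      rw [hρ]
      simp only
      rw [hHy]
      rw [show (AddCircle.equivIoc 1 m) ((B:ℝ):C1) = QuotientAddGroup.equivIocMod one_pos m ↑B from rfl]
      rw [QuotientAddGroup.equivIocMod_coe]
      have h2' : toIocMod one_pos m (B + 1) = B + 1 :=
        (toIocMod_eq_self one_pos).2 ⟨by linarith [hm01.2, hB01.1], by linarith⟩
      exact (toIocMod_add_right one_pos m B).symm.trans h2'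
    set E := (A + 1)/2 with hE
    have hAE : A < E := by rw [hE]; linarith [hA01.2]
    have hE1 : E < 1 := by rw [hE]; linarith [hA01.2]
    have hEmem : E ∈ Set.Icc (ρ x) (ρ y) := by
      rw [hρx, hρy]; exact ⟨by linarith, by linarith [hB01.1]⟩
    obtain ⟨y', hy'mem, hy'⟩ := intermediate_value_Icc hxy hρcont hEmem
    have hHy' : H ((y':ℝ):C1) = ((E:ℝ):C1) := by rw [← hy', hρcoe]
    have haY : bb (H ↑y') = E := by rw [hHy', bb_of_mem ⟨by linarith [hA01.1], hE1⟩]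
    have s6 := keyH Hbtw hz hzw (le_trans hwx hy'mem.1) (lt_of_le_of_lt hy'mem.2 hy)
    rw [← hA, ← hB, haY, if_neg (not_le.2 h1), if_pos hAE] at s6
    linarith [hB01.1]

lemma exists_lift (Hcont : Continuous H)
    (Hbtw : ∀ x y z : C1, Btw.btw x y z → Btw.btw (H x) (H y) (H z)) : ∃ g : ℝ → ℝ,
    (∀ s t : ℝ, 0 ≤ s → s ≤ t → t < 1 → g s ≤ g t) ∧
    (∀ t : ℝ, 0 ≤ t → t < 1 → 0 ≤ g t ∧ g t < 2 ∧
      ∃ k : ℤ, (k = 0 ∨ k = 1) ∧ g t = bb (H ↑t) + k) := by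
  classical
  set a : ℝ → ℝ := fun t => bb (H ↑t) with ha
  set W : Set ℝ := {t | ∃ zw : ℝ × ℝ, 0 ≤ zw.1 ∧ zw.1 ≤ zw.2 ∧ zw.2 ≤ t ∧ a zw.2 < a zw.1} with hW
  refine ⟨fun t => a t + (if t ∈ W then 1 else 0), ?_, ?_⟩
  · intro s t hs hst ht
    show a s + (if s ∈ W then 1 else 0) ≤ a t + (if t ∈ W then 1 else 0)
    by_cases hsW : s ∈ W
    · have htW : t ∈ W := by
        obtain ⟨zw, h0, h1, h2, h3⟩ := hsW
        exact ⟨zw, h0, h1, le_trans h2 hst, h3⟩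
      rw [if_pos hsW, if_pos htW]
      have hat : a s ≤ a t := by
        by_contra hc
        push_neg at hc
        obtain ⟨⟨z, w⟩, h0, h1, h2, h3⟩ := hsW
        exact no_descent Hcont Hbtw h0 h1 h2 hst ht h3 hc
      linarith
    · by_cases htW : t ∈ W
      · rw [if_neg hsW, if_pos htW]
        have h1 := (bb_mem (H ↑s)).2
        have h2 := (bb_mem (H ↑t)).1
        simp only [ha]
        linarith
      · rw [if_neg hsW, if_neg htW]
        simp only [add_zero]
        by_contra hc
        push_neg at hc
        exact htW ⟨(s, t), hs, hst, le_rfl, hc⟩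
  · intro t h0 h1
    have hmem := bb_mem (H ↑t)
    refine ⟨?_, ?_, ?_⟩
    · by_cases htW : t ∈ W <;> simp [htW, ha] <;> linarith [hmem.1, hmem.2]
    · by_cases htW : t ∈ W <;> simp [htW, ha] <;> linarith [hmem.1, hmem.2]
    · by_cases htW : t ∈ W
      · exact ⟨1, Or.inr rfl, by simp [htW, ha]⟩
      · exact ⟨0, Or.inl rfl, by simp [htW, ha]⟩
end Lift

lemma code_count {M L : ℕ} (hL : 0 < L) (H : ℕ → C1 → C1)
    (Hcont : ∀ t, t < M → Continuous (H t))
    (Hbtw : ∀ t, t < M → ∀ x y z : C1, Btw.btw x y z → Btw.btw (H t x) (H t y) (H t z)) :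
    ∃ S : Finset C1, S.card ≤ 2*L*M + 1 ∧
      ∀ ψ : C1, ∃ s ∈ S, ∀ t, t < M → dist (H t ψ) (H t s) < 1/(L:ℝ) := by
  classical
  -- choose lifts
  have hg : ∀ t : ℕ, t < M → ∃ g : ℝ → ℝ,
      (∀ s t' : ℝ, 0 ≤ s → s ≤ t' → t' < 1 → g s ≤ g t') ∧
      (∀ t' : ℝ, 0 ≤ t' → t' < 1 → 0 ≤ g t' ∧ g t' < 2 ∧
        ∃ k : ℤ, (k = 0 ∨ k = 1) ∧ g t' = bb (H t ↑t') + k) := fun t ht =>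
    exists_lift (Hcont t ht) (Hbtw t ht)
  choose! g hgmono hgprop using hg
  set Φ : C1 → (Fin M → ℤ) := fun ψ t => ⌊(L:ℝ) * g t (bb ψ)⌋ with hΦ
  have hLpos : (0:ℝ) < L := by exact_mod_cast hL
  -- monotone
  have hmono : ∀ ψ χ : C1, bb ψ ≤ bb χ → ∀ t : Fin M, Φ ψ t ≤ Φ χ t := by
    intro ψ χ h t
    apply Int.floor_le_floor
    have := hgmono t t.2 (bb ψ) (bb χ) (bb_mem ψ).1 h (bb_mem χ).2
    nlinarith
  -- coordinate bounds
  have hbound : ∀ ψ : C1, ∀ t : Fin M, Φ ψ t ∈ Set.Icc (0:ℤ) (2*L) := by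
    intro ψ t
    obtain ⟨h0, h2, _⟩ := hgprop t t.2 (bb ψ) (bb_mem ψ).1 (bb_mem ψ).2
    constructor
    · exact Int.floor_nonneg.2 (by positivity)
    · calc Φ ψ t ≤ ⌊((2*L : ℤ) : ℝ)⌋ := Int.floor_mono (by push_cast; nlinarith)
        _ = 2*L := Int.floor_intCast _
  -- chain: sums injective
  set T : (Fin M → ℤ) → ℤ := fun v => ∑ t, v t with hT
  have hinj : Set.InjOn T (Set.range Φ) := by
    rintro _ ⟨ψ, rfl⟩ _ ⟨χ, rfl⟩ hsum
    simp only [hT] at hsum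
    rcases le_total (bb ψ) (bb χ) with h | h
    · funext t
      exact (Finset.sum_eq_sum_iff_of_le (fun i _ => hmono ψ χ h i)).1 hsum t (Finset.mem_univ t)
    · funext t
      exact ((Finset.sum_eq_sum_iff_of_le (fun i _ => hmono χ ψ h i)).1 hsum.symm t
        (Finset.mem_univ t)).symm
  have himg : T '' (Set.range Φ) ⊆ Set.Icc (0:ℤ) (2*L*M) := by
    rintro _ ⟨_, ⟨ψ, rfl⟩, rfl⟩
    constructor
    · exact Finset.sum_nonneg fun t _ => (hbound ψ t).1
    · calc ∑ t, Φ ψ t ≤ ∑ _t : Fin M, (2*L:ℤ) := Finset.sum_le_sum fun t _ => (hbound ψ t).2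
        _ = M * (2*L) := by simp [mul_comm]
        _ = 2*L*M := by ring
  have hfin : (Set.range Φ).Finite :=
    Set.Finite.of_finite_image ((Set.finite_Icc _ _).subset himg) hinj
  have hcard : (Set.range Φ).ncard ≤ 2*L*M + 1 := by
    rw [← Set.ncard_image_of_injOn hinj]
    calc (T '' Set.range Φ).ncard ≤ (Set.Icc (0:ℤ) (2*L*M)).ncard :=
          Set.ncard_le_ncard himg (Set.finite_Icc _ _)
      _ ≤ 2*L*M + 1 := by
          rw [show Set.Icc (0:ℤ) (2*L*M) = ↑(Finset.Icc (0:ℤ) (2*L*M)) from (Finset.coe_Icc _ _).symm]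
          rw [Set.ncard_coe_finset, Int.card_Icc]
          have hcast : ((2*L*M : ℕ) : ℤ) = 2*(L:ℤ)*(M:ℤ) := by push_cast; ring
          rw [← hcast]
          simp
  -- representatives
  set rep : (Fin M → ℤ) → C1 := fun v => if h : ∃ ψ, Φ ψ = v then h.choose else (0 : C1) with hrep
  refine ⟨hfin.toFinset.image rep, ?_, ?_⟩
  · calc (hfin.toFinset.image rep).card ≤ hfin.toFinset.card := Finset.card_image_le
      _ = (Set.range Φ).ncard := (Set.ncard_eq_toFinset_card _ hfin).symm
      _ ≤ 2*L*M + 1 := hcard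
  · intro ψ
    have hv : ∃ χ, Φ χ = Φ ψ := ⟨ψ, rfl⟩
    refine ⟨rep (Φ ψ), Finset.mem_image_of_mem rep (hfin.mem_toFinset.2 ⟨ψ, rfl⟩), ?_⟩
    intro t ht
    have hΦeq : Φ (rep (Φ ψ)) = Φ ψ := by
      rw [hrep]
      simp only [dif_pos hv]
      exact hv.choose_spec
    set s := rep (Φ ψ) with hs
    -- same floor at coordinate t
    obtain ⟨h0ψ, h2ψ, kψ, hkψ, hgψ⟩ := hgprop t ht (bb ψ) (bb_mem ψ).1 (bb_mem ψ).2
    obtain ⟨h0s, h2s, ks, hks, hgs⟩ := hgprop t ht (bb s) (bb_mem s).1 (bb_mem s).2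
    have hfl : ⌊(L:ℝ) * bb (H t ψ)⌋ + L * kψ = ⌊(L:ℝ) * bb (H t s)⌋ + L * ks := by
      have e1 : Φ ψ ⟨t, ht⟩ = ⌊(L:ℝ) * bb (H t ψ)⌋ + L * kψ := by
        rw [hΦ]
        simp only
        rw [hgψ, mul_add]
        rw [show (L:ℝ) * (kψ:ℝ) = ((L * kψ : ℤ) : ℝ) by push_cast; ring]
        rw [Int.floor_add_intCast, bb_coe]
      have e2 : Φ s ⟨t, ht⟩ = ⌊(L:ℝ) * bb (H t s)⌋ + L * ks := by
        rw [hΦ]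
        simp only
        rw [hgs, mul_add]
        rw [show (L:ℝ) * (ks:ℝ) = ((L * ks : ℤ) : ℝ) by push_cast; ring]
        rw [Int.floor_add_intCast, bb_coe]
      rw [← e1, ← e2, hΦeq]
    have hu1 : ⌊(L:ℝ) * bb (H t ψ)⌋ ∈ Set.Ico (0:ℤ) L := by
      constructor
      · exact Int.floor_nonneg.2 (by nlinarith [(bb_mem (H t ψ)).1])
      · rw [Int.floor_lt]; push_cast; nlinarith [(bb_mem (H t ψ)).2]
    have hu2 : ⌊(L:ℝ) * bb (H t s)⌋ ∈ Set.Ico (0:ℤ) L := by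
      constructor
      · exact Int.floor_nonneg.2 (by nlinarith [(bb_mem (H t s)).1])
      · rw [Int.floor_lt]; push_cast; nlinarith [(bb_mem (H t s)).2]
    have hfeq : ⌊(L:ℝ) * bb (H t ψ)⌋ = ⌊(L:ℝ) * bb (H t s)⌋ := by
      obtain ⟨a1, a2⟩ := hu1
      obtain ⟨a3, a4⟩ := hu2
      rcases hkψ with rfl | rfl <;> rcases hks with rfl | rfl <;>
        simp only [mul_zero, mul_one, add_zero] at hfl <;> omega
    -- conclude distance bound
    have habs : |bb (H t ψ) - bb (H t s)| < 1/(L:ℝ) := by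
      have h1 := Int.floor_le ((L:ℝ) * bb (H t ψ))
      have h2 := Int.lt_floor_add_one ((L:ℝ) * bb (H t ψ))
      have h3 := Int.floor_le ((L:ℝ) * bb (H t s))
      have h4 := Int.lt_floor_add_one ((L:ℝ) * bb (H t s))
      rw [hfeq] at h1 h2
      have g1 : bb (H t s) - bb (H t ψ) < 1/(L:ℝ) := by
        rw [lt_div_iff₀ hLpos]; nlinarith
      have g2 : bb (H t ψ) - bb (H t s) < 1/(L:ℝ) := by
        rw [lt_div_iff₀ hLpos]; nlinarith
      rw [abs_lt]
      constructor <;> linarith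
    calc dist (H t ψ) (H t s) = dist ((bb (H t ψ) : ℝ) : C1) ((bb (H t s) : ℝ) : C1) := by
          rw [bb_coe, bb_coe]
      _ ≤ |bb (H t ψ) - bb (H t s)| := dist_coe_le _ _
      _ < 1/(L:ℝ) := habs


section Skew
variable {Θ : Type*} [MetricSpace Θ]
  {r : Θ → Θ} {f : Θ × C1 → Θ × C1}

lemma base_iter (hskew : ∀ p : Θ × C1, (f p).1 = r p.1) (n : ℕ) (p : Θ × C1) :
    (f^[n] p).1 = r^[n] p.1 := by
  induction n with
  | zero => rfl
  | succ n ih =>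
    rw [Function.iterate_succ_apply', Function.iterate_succ_apply', hskew, ih]

lemma pair_iter (hskew : ∀ p : Θ × C1, (f p).1 = r p.1) (n : ℕ) (θ : Θ) (ψ : C1) :
    f^[n] (θ, ψ) = (r^[n] θ, (f^[n] (θ, ψ)).2) := by
  ext
  · exact base_iter hskew n (θ, ψ)
  · rfl

lemma tower_cont (hf : Continuous f) (i : ℕ) (θ : Θ) :
    Continuous (fun ψ : C1 => (f^[i] (θ, ψ)).2) :=
  continuous_snd.comp ((hf.iterate i).comp (continuous_const.prodMk continuous_id))

lemma tower_btw (hskew : ∀ p : Θ × C1, (f p).1 = r p.1)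
    (hmono : ∀ (θ : Θ) (a b c : C1), Btw.btw a b c →
      Btw.btw (f (θ, a)).2 (f (θ, b)).2 (f (θ, c)).2)
    (i : ℕ) (θ : Θ) (a b c : C1) (h : Btw.btw a b c) :
    Btw.btw ((f^[i] (θ, a)).2) ((f^[i] (θ, b)).2) ((f^[i] (θ, c)).2) := by
  induction i with
  | zero => exact h
  | succ i ih =>
    have hstep : ∀ ψ : C1, (f^[i+1] (θ, ψ)).2 = (f (r^[i] θ, (f^[i] (θ, ψ)).2)).2 := by
      intro ψ
      rw [Function.iterate_succ_apply']
      conv_lhs => rw [pair_iter hskew i θ ψ]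
    rw [hstep a, hstep b, hstep c]
    exact hmono (r^[i] θ) _ _ _ ih

lemma fiber_span (hf : Continuous f) (hskew : ∀ p : Θ × C1, (f p).1 = r p.1)
    (hmono : ∀ (θ : Θ) (a b c : C1), Btw.btw a b c →
      Btw.btw (f (θ, a)).2 (f (θ, b)).2 (f (θ, c)).2)
    {L M : ℕ} (hL : 0 < L) (θ : Θ) :
    ∃ S : Finset C1, S.card ≤ 2*L*M + 1 ∧
      ∀ ψ : C1, ∃ s ∈ S, ∀ i, i < M →
        dist ((f^[i] (θ, ψ)).2) ((f^[i] (θ, s)).2) < 1/(L:ℝ) :=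
  code_count hL (fun i ψ => (f^[i] (θ, ψ)).2)
    (fun i _ => tower_cont hf i θ)
    (fun i _ => tower_btw hskew hmono i θ)

/-- finite family uniform continuity -/
lemma unif_family {X : Type*} [MetricSpace X] (F : ℕ → X → X)
    (h : ∀ i : ℕ, UniformContinuous (F i)) {ε : ℝ} (hε : 0 < ε) (M : ℕ) :
    ∃ δ > 0, ∀ i < M, ∀ a b : X, dist a b < δ → dist (F i a) (F i b) < ε := by
  induction M with
  | zero => exact ⟨1, one_pos, fun i hi => absurd hi (Nat.not_lt_zero i)⟩
  | succ M ih =>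
    obtain ⟨δ₁, hδ₁, h1⟩ := ih
    obtain ⟨δ₂, hδ₂, h2⟩ := Metric.uniformContinuous_iff.1 (h M) ε hε
    refine ⟨min δ₁ δ₂, lt_min hδ₁ hδ₂, fun i hi a b hab => ?_⟩
    rcases Nat.lt_succ_iff_lt_or_eq.1 hi with hi' | rfl
    · exact h1 i hi' a b (lt_of_lt_of_le hab (min_le_left _ _))
    · exact h2 (lt_of_lt_of_le hab (min_le_right _ _))


lemma pair_iter' (hskew : ∀ p : Θ × C1, (f p).1 = r p.1) (n : ℕ) (p : Θ × C1) :
    f^[n] p = (r^[n] p.1, (f^[n] p).2) := by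
  ext
  · exact base_iter hskew n p
  · rfl


lemma cover_bound [CompactSpace Θ] (hf : Continuous f)
    (hskew : ∀ p : Θ × C1, (f p).1 = r p.1)
    (hmono : ∀ (θ : Θ) (a b c : C1), Btw.btw a b c →
      Btw.btw (f (θ, a)).2 (f (θ, b)).2 (f (θ, c)).2)
    {ε : ℝ} (hε : 0 < ε) {L M : ℕ} (hL : 0 < L) (hM : 0 < M) (hLε : 1/(L:ℝ) ≤ ε/4) :
    ∃ δ > 0, ∀ n : ℕ,
      coverMincard f Set.univ {p : (Θ × C1) × (Θ × C1) | dist p.1 p.2 < ε} n ≤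
        coverMincard r Set.univ {q : Θ × Θ | dist q.1 q.2 < δ} n *
          ((2*L*M + 1 : ℕ) : ℕ∞)^(n/M + 1) := by
  classical
  obtain ⟨δu, hδu, hδuprop⟩ := unif_family (fun i => f^[i])
    (fun i => CompactSpace.uniformContinuous_of_continuous (hf.iterate i))
    (show (0:ℝ) < ε/8 by linarith) M
  set δ₀ := min δu (ε/4) with hδ₀def
  have hδ₀pos : 0 < δ₀ := lt_min hδu (by linarith)
  have hδ₀ε : δ₀ ≤ ε/4 := min_le_right _ _
  have hδ₀u : δ₀ ≤ δu := min_le_left _ _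
  refine ⟨δ₀, hδ₀pos, ?_⟩
  intro n
  set U := {p : (Θ × C1) × (Θ × C1) | dist p.1 p.2 < ε} with hU
  set V := {q : Θ × Θ | dist q.1 q.2 < δ₀} with hV
  rcases isEmpty_or_nonempty Θ with hΘ | hΘ
  · have h0 : (Set.univ : Set (Θ × C1)) = ∅ := by
      rw [Set.univ_eq_empty_iff]
      exact ⟨fun p => hΘ.false p.1⟩
    rw [h0, coverMincard_empty]
    exact zero_le
  set N := coverMincard r Set.univ V n with hN
  set P := 2*L*M + 1 with hP
  set m := n / M + 1 with hm
  rcases eq_top_or_lt_top N with htop | hfin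
  · rw [htop, ENat.top_mul]
    · exact le_top
    · exact pow_ne_zero _ (by simp [hP])
  obtain ⟨sY, hsYcov, hsYcard⟩ := (coverMincard_finite_iff r Set.univ V n).1 hfin
  -- base center choice
  have hczex : ∀ θ : Θ, ∃ z ∈ sY, ∀ k < n, dist (r^[k] z) (r^[k] θ) < δ₀ := by
    intro θ
    have h1 := hsYcov (Set.mem_univ θ)
    obtain ⟨z, hz, hball⟩ := h1
    refine ⟨z, hz, fun k hk => ?_⟩
    have h2 := (mem_dynEntourage.1 hball) k hk
    simpa [ball, V, dist_comm] using h2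
  choose cz hcz1 hcz2 using hczex
  -- fiber spanning
  have hSex := fun θ : Θ => fiber_span hf hskew hmono (L := L) (M := M) hL θ
  choose S hScard hSspan using hSex
  choose sel hselmem hseldist using hSspan
  set code : Θ × C1 → Θ × (Fin m → C1) :=
    fun p => (cz p.1, fun j => sel (r^[(j:ℕ)*M] (cz p.1)) ((f^[(j:ℕ)*M] p).2)) with hcode
  -- key : same code ⇒ orbits ε-close
  have hkey : ∀ p q : Θ × C1, code p = code q → ∀ t, t < n →
      dist (f^[t] p) (f^[t] q) < ε := by
    intro p q hpq t ht
    have hzeq : cz p.1 = cz q.1 := congrArg Prod.fst hpq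
    set z := cz p.1 with hz
    set j := t / M with hj
    set i := t % M with hi
    have hiM : i < M := Nat.mod_lt _ hM
    have htji : i + j*M = t := by
      rw [hi, hj, mul_comm]
      exact Nat.mod_add_div t M
    have hjm : j < m := by
      rw [hj, hm]
      exact Nat.lt_succ_of_le (Nat.div_le_div_right (le_of_lt ht))
    have hjMn : j*M < n := lt_of_le_of_lt (le_of_add_le_right (le_of_eq htji)) ht
    -- base estimate
    have hbase : dist (f^[t] p).1 (f^[t] q).1 < ε/2 := by
      rw [base_iter hskew, base_iter hskew]
      have h1 := hcz2 p.1 t ht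
      have h2 := hcz2 q.1 t ht
      rw [← hzeq] at h2
      calc dist (r^[t] p.1) (r^[t] q.1)
          ≤ dist (r^[t] p.1) (r^[t] z) + dist (r^[t] z) (r^[t] q.1) := dist_triangle _ _ _
        _ < δ₀ + δ₀ := by rw [dist_comm (r^[t] p.1)]; exact add_lt_add h1 h2
        _ ≤ ε/2 := by linarith
    -- fiber estimate
    set w := r^[j*M] z with hw
    have hfib : ∀ p' : Θ × C1, cz p'.1 = z →
        dist ((f^[t] p').2) ((f^[i] (w, sel w ((f^[j*M] p').2))).2) < ε/8 + 1/(L:ℝ) := by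
      intro p' hz'
      set ψ' := (f^[j*M] p').2 with hψ'
      have hdecomp : f^[t] p' = f^[i] (f^[j*M] p') := by
        rw [← htji, Function.iterate_add_apply]
      have hbdist : dist (f^[j*M] p') ((w, ψ') : Θ × C1) < δu := by
        rw [pair_iter' hskew (j*M) p', Prod.dist_eq]
        simp only [dist_self]
        rw [hψ', dist_self, sup_eq_left.2 dist_nonneg]
        have h3 := hcz2 p'.1 (j*M) hjMn
        rw [hz'] at h3
        rw [dist_comm] at h3
        calc dist (r^[j*M] p'.1) w < δ₀ := by rw [hw]; exact h3
          _ ≤ δu := hδ₀u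
      have huc := hδuprop i hiM _ _ hbdist
      have h2nd : dist ((f^[i] (f^[j*M] p')).2) ((f^[i] ((w, ψ') : Θ × C1)).2) ≤
          dist (f^[i] (f^[j*M] p')) (f^[i] ((w, ψ') : Θ × C1)) := by
        rw [Prod.dist_eq]; exact le_sup_right
      have hseld := hseldist w ψ' i hiM
      calc dist ((f^[t] p').2) ((f^[i] (w, sel w ψ')).2)
          ≤ dist ((f^[t] p').2) ((f^[i] ((w, ψ') : Θ × C1)).2) +
            dist ((f^[i] ((w, ψ') : Θ × C1)).2) ((f^[i] (w, sel w ψ')).2) := dist_triangle _ _ _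
        _ < ε/8 + 1/(L:ℝ) := by
            apply add_lt_add_of_le_of_lt _ hseld
            · rw [hdecomp]
              exact le_trans h2nd (le_of_lt huc)
    have hcp := hfib p rfl
    have hcq := hfib q hzeq.symm
    -- the selected points agree
    have hseleq : sel w ((f^[j*M] p).2) = sel w ((f^[j*M] q).2) := by
      have h5 := congrFun (congrArg Prod.snd hpq) ⟨j, hjm⟩
      simp only [hcode] at h5
      rw [← hzeq] at h5
      exact h5
    rw [hseleq] at hcp
    have hfiber : dist (f^[t] p).2 (f^[t] q).2 < ε := by
      calc dist (f^[t] p).2 (f^[t] q).2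
          ≤ dist ((f^[t] p).2) ((f^[i] (w, sel w ((f^[j*M] q).2))).2) +
            dist ((f^[i] (w, sel w ((f^[j*M] q).2))).2) ((f^[t] q).2) := dist_triangle _ _ _
        _ < (ε/8 + 1/(L:ℝ)) + (ε/8 + 1/(L:ℝ)) := by
            apply add_lt_add hcp
            rw [dist_comm]
            exact hcq
        _ ≤ ε/8 + ε/4 + (ε/8 + ε/4) := by linarith
        _ < ε := by linarith
    rw [Prod.dist_eq, sup_lt_iff]
    exact ⟨lt_trans hbase (by linarith), hfiber⟩
  -- the finite code set
  set K : Finset (Θ × (Fin m → C1)) :=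
    sY.biUnion (fun z => (Fintype.piFinset (fun j : Fin m => S (r^[(j:ℕ)*M] z))).image
      (fun σ => (z, σ))) with hK
  have hcodemem : ∀ p : Θ × C1, code p ∈ K := by
    intro p
    rw [hK, Finset.mem_biUnion]
    refine ⟨cz p.1, hcz1 p.1, ?_⟩
    apply Finset.mem_image_of_mem
    rw [Fintype.mem_piFinset]
    intro j
    exact hselmem _ _
  have hX0 : Nonempty (Θ × C1) := by
    exact ⟨(Classical.choice hΘ, 0)⟩
  set rep : Θ × (Fin m → C1) → Θ × C1 :=
    fun k => if h : ∃ p : Θ × C1, code p = k then h.choose else Classical.choice hX0 with hrep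
  have hcover : IsDynCoverOf f Set.univ U n (↑(K.image rep) : Set (Θ × C1)) := by
    intro q _
    refine ⟨rep (code q), Finset.mem_coe.2 (Finset.mem_image_of_mem rep (hcodemem q)), ?_⟩
    rw [mem_dynEntourage]
    intro k hk
    have hex : ∃ p : Θ × C1, code p = code q := ⟨q, rfl⟩
    have hc : code (rep (code q)) = code q := by
      rw [hrep]
      simp only [dif_pos hex]
      exact hex.choose_spec
    have := hkey _ _ hc k hk
    simpa [ball, U, dist_comm] using this
  -- cardinality
  have hcard1 : (K.image rep).card ≤ N.toNat * P^m := by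
    calc (K.image rep).card ≤ K.card := Finset.card_image_le
      _ ≤ ∑ z ∈ sY, ((Fintype.piFinset (fun j : Fin m => S (r^[(j:ℕ)*M] z))).image
          (fun σ => (z, σ))).card := Finset.card_biUnion_le
      _ ≤ ∑ _z ∈ sY, P^m := by
          apply Finset.sum_le_sum
          intro z _
          calc ((Fintype.piFinset (fun j : Fin m => S (r^[(j:ℕ)*M] z))).image
              (fun σ => (z, σ))).card
              ≤ (Fintype.piFinset (fun j : Fin m => S (r^[(j:ℕ)*M] z))).card :=
                Finset.card_image_le
            _ = ∏ j : Fin m, (S (r^[(j:ℕ)*M] z)).card := Fintype.card_piFinset _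
            _ ≤ ∏ _j : Fin m, P := Finset.prod_le_prod (fun _ _ => Nat.zero_le _)
                (fun j _ => hScard _)
            _ = P^m := by simp
      _ = sY.card * P^m := by rw [Finset.sum_const, smul_eq_mul]
      _ = N.toNat * P^m := by
          congr 1
          have : ((sY.card : ℕ∞)) = N := hsYcard
          rw [← this]
          simp
  calc coverMincard f Set.univ U n ≤ ((K.image rep).card : ℕ∞) :=
        hcover.coverMincard_le_card
    _ ≤ ((N.toNat * P^m : ℕ) : ℕ∞) := by exact_mod_cast hcard1
    _ = N * ((P:ℕ) : ℕ∞)^m := by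
        push_cast
        rw [ENat.coe_toNat (LT.lt.ne_top hfin)]

lemma ent_le [CompactSpace Θ] (hf : Continuous f)
    (hskew : ∀ p : Θ × C1, (f p).1 = r p.1)
    (hmono : ∀ (θ : Θ) (a b c : C1), Btw.btw a b c →
      Btw.btw (f (θ, a)).2 (f (θ, b)).2 (f (θ, c)).2) :
    coverEntropy f Set.univ ≤ coverEntropy r Set.univ := by
  classical
  rcases isEmpty_or_nonempty Θ with hΘ | hΘ
  · have h0 : (Set.univ : Set (Θ × C1)) = ∅ := by
      rw [Set.univ_eq_empty_iff]
      exact ⟨fun p => hΘ.false p.1⟩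
    rw [h0, coverEntropy_empty]
    exact bot_le
  have hYne : (Set.univ : Set Θ).Nonempty := ⟨Classical.choice hΘ, trivial⟩
  set E := coverEntropy r Set.univ with hE
  rw [coverEntropy_eq_iSup_basis Metric.uniformity_basis_dist f Set.univ]
  apply iSup₂_le
  intro ε hε
  set L := max 1 ⌈4/ε⌉₊ with hLdef
  have hL : 0 < L := lt_of_lt_of_le one_pos (le_max_left _ _)
  have hLε : 1/(L:ℝ) ≤ ε/4 := by
    have h1 : (4:ℝ)/ε ≤ ⌈4/ε⌉₊ := Nat.le_ceil _
    have h2 : (4:ℝ)/ε ≤ L := le_trans h1 (by exact_mod_cast le_max_right 1 ⌈4/ε⌉₊)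
    have h3 : (0:ℝ) < 4/ε := by positivity
    calc 1/(L:ℝ) ≤ 1/((4:ℝ)/ε) := one_div_le_one_div_of_le h3 h2
      _ = ε/4 := by field_simp
  -- per-M bound
  have hMbound : ∀ M : ℕ, 0 < M →
      coverEntropyEntourage f Set.univ {p : (Θ × C1) × (Θ × C1) | dist p.1 p.2 < ε} ≤
        E + ((Real.log ((2*L*M + 1 : ℕ) : ℝ) / (M:ℝ) : ℝ) : EReal) := by
    intro M hM
    obtain ⟨δ, hδ, hbound⟩ := cover_bound hf hskew hmono hε hL hM hLε
    set P := 2*L*M + 1 with hPdef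
    set cR := Real.log ((P:ℕ) : ℝ) with hcRdef
    have hP1 : (1:ℝ) ≤ ((P:ℕ):ℝ) := by exact_mod_cast Nat.one_le_iff_ne_zero.2 (Nat.succ_ne_zero _)
    have hcR0 : 0 ≤ cR := Real.log_nonneg hP1
    have hPlog : ENNReal.log ((P:ℕ) : ℝ≥0∞) = (cR : EReal) := by
      have hxpos : (0:ℝ) < ((P:ℕ) : ℝ≥0∞).toReal := by
        rw [ENNReal.toReal_natCast]
        exact_mod_cast Nat.succ_pos (2*L*M)
      rw [ENNReal.log_pos_real' hxpos]
      congr 1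
    set v := fun n : ℕ => (((n/M + 1 : ℕ) : EReal) * (cR : EReal)) / (n : EReal) with hv
    have hvnonneg : ∀ n, 0 ≤ v n :=
      fun n => EReal.div_nonneg (mul_nonneg (Nat.cast_nonneg' _) (by exact_mod_cast hcR0))
        (Nat.cast_nonneg' n)
    -- pointwise bound
    have hpt : ∀ n : ℕ, ENNReal.log (coverMincard f Set.univ
        {p : (Θ × C1) × (Θ × C1) | dist p.1 p.2 < ε} n) / (n : EReal) ≤
        ENNReal.log (coverMincard r Set.univ {q : Θ × Θ | dist q.1 q.2 < δ} n) / (n : EReal)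
          + v n := by
      intro n
      have h1 : ENNReal.log (coverMincard f Set.univ
          {p : (Θ × C1) × (Θ × C1) | dist p.1 p.2 < ε} n) ≤
          ENNReal.log (coverMincard r Set.univ {q : Θ × Θ | dist q.1 q.2 < δ} n) +
            ((n/M + 1 : ℕ) : EReal) * (cR : EReal) := by
        have h2 := ENNReal.log_monotone (ENat.toENNReal_le.2 (hbound n))
        apply le_trans h2
        rw [ENat.toENNReal_mul, ENNReal.log_mul_add, ENat.toENNReal_pow, ENNReal.log_pow,
          ENat.toENNReal_coe, hPlog]
      apply le_trans (EReal.div_le_div_right_of_nonneg (Nat.cast_nonneg' n) h1)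
      rw [EReal.div_right_distrib_of_nonneg (by have h := (one_le_coverMincard_iff r Set.univ {q : Θ × Θ | dist q.1 q.2 < δ} n).2 hYne; exact ENNReal.zero_le_log_iff.2 (by exact_mod_cast h))
        (mul_nonneg (Nat.cast_nonneg' _) (by exact_mod_cast hcR0))]
    -- limsup of v
    have hvle : ∀ n : ℕ, 1 ≤ n → v n ≤ ((cR/M : ℝ) : EReal) + ((cR:ℝ) : EReal) / (n : EReal) := by
      intro n hn
      have hnR : (0:ℝ) < n := by exact_mod_cast hn
      have hMR : (0:ℝ) < M := by exact_mod_cast hM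
      have hk : ((n/M + 1 : ℕ) : ℝ) ≤ (n:ℝ)/(M:ℝ) + 1 := by
        push_cast
        have := Nat.cast_div_le (α := ℝ) (m := n) (n := M)
        linarith
      have hreal : ((n/M + 1 : ℕ) : ℝ) * cR / (n:ℝ) ≤ cR/(M:ℝ) + cR/(n:ℝ) := by
        have h5 : ((n/M + 1 : ℕ) : ℝ) * cR ≤ ((n:ℝ)/(M:ℝ) + 1) * cR :=
          mul_le_mul_of_nonneg_right hk hcR0
        have h6 : ((n:ℝ)/(M:ℝ) + 1) * cR / (n:ℝ) = cR/(M:ℝ) + cR/(n:ℝ) := by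
          field_simp
        rw [← h6]
        gcongr
      calc v n = ((((n/M + 1 : ℕ) : ℝ) * cR / (n:ℝ) : ℝ) : EReal) := by
            rw [hv]
            simp only
            rw [← EReal.coe_coe_eq_natCast (n/M+1), ← EReal.coe_coe_eq_natCast n,
              ← EReal.coe_mul, ← EReal.coe_div]
        _ ≤ ((cR/(M:ℝ) + cR/(n:ℝ) : ℝ) : EReal) := EReal.coe_le_coe_iff.2 hreal
        _ = ((cR/M : ℝ) : EReal) + ((cR:ℝ) : EReal) / (n : EReal) := by
            rw [EReal.coe_add, ← EReal.coe_coe_eq_natCast n, ← EReal.coe_div]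
    have hlim0 : atTop.limsup (fun n : ℕ => ((cR:ℝ) : EReal) / (n : EReal)) = 0 :=
      Tendsto.limsup_eq (EReal.tendsto_const_div_atTop_nhds_zero_nat
        (EReal.coe_ne_bot cR) (EReal.coe_ne_top cR))
    have hlimv : atTop.limsup v ≤ ((cR/M : ℝ) : EReal) := by
      apply le_trans (limsup_le_limsup (eventually_atTop.2 ⟨1, hvle⟩))
      have h7 := EReal.limsup_add_le (u := fun _ : ℕ => ((cR/M : ℝ) : EReal))
        (v := fun n : ℕ => ((cR:ℝ) : EReal) / (n : EReal)) (f := atTop)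
        (Or.inl (by rw [limsup_const]; exact EReal.coe_ne_bot _))
        (Or.inl (by rw [limsup_const]; exact EReal.coe_ne_top _))
      rw [limsup_const, hlim0, add_zero] at h7
      exact h7
    have hlimv_bot : atTop.limsup v ≠ ⊥ := by
      intro hb
      have h8 : (0:EReal) ≤ atTop.limsup v :=
        le_limsup_of_frequently_le (Frequently.of_forall hvnonneg)
      rw [hb] at h8
      exact absurd h8 (by simp)
    have hlimv_top : atTop.limsup v ≠ ⊤ :=
      ne_top_of_le_ne_top (EReal.coe_ne_top _) hlimv
    -- assemble
    have hmain : coverEntropyEntourage f Set.univ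
        {p : (Θ × C1) × (Θ × C1) | dist p.1 p.2 < ε} ≤
        coverEntropyEntourage r Set.univ {q : Θ × Θ | dist q.1 q.2 < δ} + atTop.limsup v := by
      apply le_trans (limsup_le_limsup (Eventually.of_forall hpt))
      exact EReal.limsup_add_le (Or.inr hlimv_top) (Or.inr hlimv_bot)
    apply le_trans hmain
    apply add_le_add
    · exact coverEntropyEntourage_le_coverEntropy r Set.univ (Metric.dist_mem_uniformity hδ)
    · exact hlimv
  -- conclude using M → ∞
  by_contra hcon
  push_neg at hcon
  obtain ⟨q, hq1, hq2⟩ := EReal.exists_between_coe_real hcon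
  have hE0 : (0:EReal) ≤ E := coverEntropy_nonneg r hYne
  have hEtop : E ≠ ⊤ := fun h => absurd hq1 (by rw [h]; simp)
  have hEbot : E ≠ ⊥ := fun h => absurd hE0 (by rw [h]; simp)
  set e := E.toReal with hedef
  have he : E = (e : EReal) := (EReal.coe_toReal hEtop hEbot).symm
  have hκ : 0 < q - e := by
    have : (e : EReal) < (q : EReal) := he ▸ hq1
    have := EReal.coe_lt_coe_iff.1 this
    linarith
  set κ := q - e with hκdef
  -- find good M
  have hfind : ∃ M : ℕ, 0 < M ∧ Real.log ((2*L*M + 1 : ℕ) : ℝ) / (M:ℝ) ≤ κ := by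
    have hc : (0:ℝ) < κ/(2*L+1) := by positivity
    have hlo := Asymptotics.isLittleO_iff.1 Real.isLittleO_log_id_atTop hc
    have htend : Tendsto (fun M : ℕ => ((2*L*M + 1 : ℕ) : ℝ)) atTop atTop := by
      apply tendsto_atTop_mono (fun M => ?_) tendsto_natCast_atTop_atTop
      have hmn : M ≤ 2*L*M + 1 :=
        le_trans (by simpa using Nat.mul_le_mul_right M (show 1 ≤ 2*L by omega)) (Nat.le_succ _)
      exact_mod_cast hmn
    obtain ⟨M, hM1, hM2⟩ := ((htend.eventually hlo).and (eventually_ge_atTop 1)).exists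
    refine ⟨M, by omega, ?_⟩
    set x := ((2*L*M + 1 : ℕ) : ℝ) with hxdef
    have hx1 : (1:ℝ) ≤ x := by
      rw [hxdef]; exact_mod_cast Nat.one_le_iff_ne_zero.2 (Nat.succ_ne_zero _)
    have hM2R : (1:ℝ) ≤ (M:ℝ) := by exact_mod_cast hM2
    have hMposR : (0:ℝ) < (M:ℝ) := by linarith
    simp only [Real.norm_eq_abs, id_eq] at hM1
    rw [abs_of_nonneg (Real.log_nonneg hx1), abs_of_nonneg (by linarith : (0:ℝ) ≤ x)] at hM1
    have hstep : x ≤ (2*(L:ℝ)+1)*(M:ℝ) := by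
      rw [hxdef]; push_cast; nlinarith
    have h2L : (0:ℝ) < 2*(L:ℝ)+1 := by positivity
    have hlog : Real.log x ≤ κ * (M:ℝ) := by
      calc Real.log x ≤ κ/(2*(L:ℝ)+1) * x := hM1
        _ ≤ κ/(2*(L:ℝ)+1) * ((2*(L:ℝ)+1)*(M:ℝ)) := by
            apply mul_le_mul_of_nonneg_left hstep (le_of_lt (by positivity))
        _ = κ * (M:ℝ) := by field_simp
    rw [div_le_iff₀ hMposR]
    exact hlog
  obtain ⟨M, hMpos, hMκ⟩ := hfind
  have h9 := hMbound M hMpos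
  rw [he] at h9
  have h10 : ((e:EReal) + ((Real.log ((2*L*M + 1 : ℕ) : ℝ) / (M:ℝ) : ℝ) : EReal)) ≤
      ((e:EReal) + (κ:EReal)) := add_le_add_right (EReal.coe_le_coe_iff.2 hMκ) _
  have h11 : ((e:EReal) + (κ:EReal)) = (q:EReal) := by
    rw [← EReal.coe_add]
    congr 1
    rw [hκdef]
    ring
  exact absurd hq2 (not_lt.2 (h9.trans (h10.trans_eq h11)))

end Skew

end S11

end

theorem stmt11 {Θ : Type*} [MetricSpace Θ] [CompactSpace Θ] [MeasurableSpace Θ] [BorelSpace Θ]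
    (r : Θ → Θ) (hr : Continuous r)
    (hUE : ∃! μ : Measure Θ, IsProbabilityMeasure μ ∧ μ.map r = μ)
    (f : Θ × AddCircle (1 : ℝ) → Θ × AddCircle (1 : ℝ)) (hf : Continuous f)
    (hskew : ∀ p : Θ × AddCircle (1 : ℝ), (f p).1 = r p.1)
    -- every fibre map preserves the cyclic order of the circle
    (hmono : ∀ (θ : Θ) (a b c : AddCircle (1 : ℝ)), Btw.btw a b c →
      Btw.btw (f (θ, a)).2 (f (θ, b)).2 (f (θ, c)).2) :
    Dynamics.coverEntropy f Set.univ = Dynamics.coverEntropy r Set.univ := by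
  apply le_antisymm
  · exact S11.ent_le hf hskew hmono
  · have hsemi : Function.Semiconj Prod.fst f r := fun p => hskew p
    have h1 := Dynamics.coverEntropy_image_le_of_uniformContinuous (S := f) (T := r)
      (φ := Prod.fst) hsemi uniformContinuous_fst Set.univ
    rwa [Set.image_univ, Prod.range_fst] at h1
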